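/- For n ≥ 3 and p,q,p′,q′ ≥ 1 with p+q = p′+q′ = n−1, the identity x^p h k t x^q ≈ h x^{p′} k x^{q′} t is equationally equivalent to the three identities x^p h x^q ≈ h x^{n−1}, x^p k x^q ≈ x^{p′} k x^{q′}, and x^p t x^q ≈ x^{n−1} t. -/

import Mathlib

abbrev Word := List ℕ

def subst (φ : ℕ → Word) (w : Word) : Word := w.flatMap φ

inductive Deduce (S : Set (Word × Word)) : Word → Word → Prop
  | refl (w : Word) : Deduce S w w
  | symm {u v : Word} : Deduce S u v → Deduce S v u
  | trans {u v w : Word} : Deduce S u v → Deduce S v w → Deduce S u w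
  | step (a b : Word) (φ : ℕ → Word) {s t : Word} (h : (s, t) ∈ S) :
      Deduce S (a ++ subst φ s ++ b) (a ++ subst φ t ++ b)

def FM (w : Word) : Type := Option {u : Word // u <:+: w}

def fmul {w : Word} : FM w → FM w → FM w
  | some u, some v =>
      if h : (u.1 ++ v.1) <:+: w then some ⟨u.1 ++ v.1, h⟩ else none
  | _, _ => none

def fone (w : Word) : FM w := some ⟨[], List.nil_infix⟩

theorem fmul_none_left {w : Word} (a : FM w) : fmul none a = none := rfl

theorem fmul_none_right {w : Word} (a : FM w) : fmul a none = none := by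
  rcases a with _ | u <;> rfl

theorem fmul_some {w : Word} (u v : {u : Word // u <:+: w}) :
    fmul (some u) (some v) =
      if h : (u.1 ++ v.1) <:+: w then some ⟨u.1 ++ v.1, h⟩ else none := rfl

theorem fmul_assoc {w : Word} (a b c : FM w) : fmul (fmul a b) c = fmul a (fmul b c) := by
  rcases a with _ | u
  · rfl
  rcases b with _ | v
  · rfl
  rcases c with _ | t
  · rw [fmul_none_right] <;> rfl
  rw [fmul_some, fmul_some]
  by_cases h : (u.1 ++ v.1 ++ t.1) <:+: w
  · have h1 : (u.1 ++ v.1) <:+: w := List.IsInfix.trans ⟨[], t.1, by simp⟩ h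
    have h2 : (v.1 ++ t.1) <:+: w := List.IsInfix.trans ⟨u.1, [], by simp⟩ h
    rw [dif_pos h1, fmul_some, dif_pos h2, fmul_some, dif_pos h,
      dif_pos (show (u.1 ++ (v.1 ++ t.1)) <:+: w by simpa [List.append_assoc] using h)]
    simp [List.append_assoc] <;> rfl
  · by_cases h1 : (u.1 ++ v.1) <:+: w
    · rw [dif_pos h1, fmul_some, dif_neg h]
      by_cases h2 : (v.1 ++ t.1) <:+: w
      · rw [dif_pos h2, fmul_some,
          dif_neg (fun hh => h (by simpa [List.append_assoc] using hh))]
      · rw [dif_neg h2] <;> rfl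
    · rw [dif_neg h1]
      by_cases h2 : (v.1 ++ t.1) <:+: w
      · rw [dif_pos h2, fmul_some,
          dif_neg (fun hh => h1 (List.IsInfix.trans ⟨[], t.1, by simp⟩ hh))] <;> rfl
      · rw [dif_neg h2] <;> rfl

instance (w : Word) : Monoid (FM w) where
  mul := fmul
  one := fone w
  mul_assoc := fmul_assoc
  one_mul := by
    rintro (_ | u)
    · rfl
    · show fmul (fone w) (some u) = some u
      rw [fone, fmul_some, dif_pos (by simpa using u.2)]
      simp <;> rfl
  mul_one := by
    rintro (_ | u)
    · rfl
    · show fmul (some u) (fone w) = some u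
      rw [fone, fmul_some, dif_pos (by simpa using u.2)]
      simp <;> rfl

def SatId (M : Type) [Monoid M] (p : Word × Word) : Prop :=
  ∀ φ : ℕ → M, (p.1.map φ).prod = (p.2.map φ).prod

def VSat (E : Set (Word × Word)) (p : Word × Word) : Prop :=
  ∀ (M : Type) [Monoid M], (∀ q ∈ E, SatId M q) → SatId M p

def ids0 : Set (Word × Word) :=
  {([0,1,2,0,3,1],[1,0,2,0,3,1]), ([0,2,0,1,3,1],[0,2,1,0,3,1]), ([0,2,1,3,0,1],[0,2,1,3,1,0])}

def idA (n : ℕ) : Word × Word :=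
  (List.replicate n 0 ++ (List.range n).map (· + 1),
   ((List.range n).map (fun i => [i + 1, 0])).flatten)

def rigid (e₀ : ℕ) (es : List ℕ) : Word :=
  List.replicate e₀ 0 ++ (((List.range es.length).zip es).map (fun p => (p.1 + 1) :: List.replicate p.2 0)).flatten

def Bword (n i : ℕ) : Word := List.replicate i 0 ++ 1 :: List.replicate (n - 1 - i) 0

def wmr (m r : ℕ) : Word := rigid (m - 1) (List.replicate r (m - 1))

def X (p : ℕ) : Word := List.replicate p 0


lemma substX (φ : ℕ → Word) (h : φ 0 = [0]) : ∀ m, (X m).flatMap φ = X m := by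
  intro m
  induction m with
  | zero => rfl
  | succ k ih =>
    rw [X, List.replicate_succ, List.flatMap_cons, h]
    rw [X] at ih
    rw [ih]
    rfl

lemma substX' (φ : ℕ → Word) (h : φ 0 = [0]) (m : ℕ) : subst φ (X m) = X m :=
  substX φ h m

lemma replX (φ : ℕ → Word) (h : φ 0 = [0]) (m : ℕ) :
    (List.replicate m 0).flatMap φ = List.replicate m 0 :=
  substX φ h m

lemma X_add (a b : ℕ) : X (a + b) = X a ++ X b := by
  rw [X, X, X, List.replicate_add]

/-- For `n ≥ 3` and `p,q,p',q' ≥ 1` with `p+q = p'+q' = n-1`, the identity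
`x^p h k t x^q ≈ h x^{p'} k x^{q'} t` is equationally equivalent to the identities
`x^p h x^q ≈ h x^{n-1}`, `x^p k x^q ≈ x^{p'} k x^{q'}`, and `x^p t x^q ≈ x^{n-1} t`.
(Variables: `x = 0`, `h = 1`, `k = 2`, `t = 3`.) -/
theorem stmt9 (n p q p' q' : ℕ) (hn : 3 ≤ n)
    (hp : 1 ≤ p) (hq : 1 ≤ q) (hp' : 1 ≤ p') (hq' : 1 ≤ q')
    (hpq : p + q = n - 1) (hpq' : p' + q' = n - 1) :
    Deduce {(X p ++ [1] ++ X q, [1] ++ X (n-1)),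
            (X p ++ [2] ++ X q, X p' ++ [2] ++ X q'),
            (X p ++ [3] ++ X q, X (n-1) ++ [3])}
      (X p ++ [1, 2, 3] ++ X q) ([1] ++ X p' ++ [2] ++ X q' ++ [3]) ∧
    Deduce {(X p ++ [1, 2, 3] ++ X q, [1] ++ X p' ++ [2] ++ X q' ++ [3])}
      (X p ++ [1] ++ X q) ([1] ++ X (n-1)) ∧
    Deduce {(X p ++ [1, 2, 3] ++ X q, [1] ++ X p' ++ [2] ++ X q' ++ [3])}
      (X p ++ [2] ++ X q) (X p' ++ [2] ++ X q') ∧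
    Deduce {(X p ++ [1, 2, 3] ++ X q, [1] ++ X p' ++ [2] ++ X q' ++ [3])}
      (X p ++ [3] ++ X q) (X (n-1) ++ [3]) := by
  set S3 : Set (Word × Word) :=
    {(X p ++ [1] ++ X q, [1] ++ X (n-1)),
     (X p ++ [2] ++ X q, X p' ++ [2] ++ X q'),
     (X p ++ [3] ++ X q, X (n-1) ++ [3])} with hS3
  set S1 : Set (Word × Word) :=
    {(X p ++ [1, 2, 3] ++ X q, [1] ++ X p' ++ [2] ++ X q' ++ [3])} with hS1
  have hA : (X p ++ [1] ++ X q, [1] ++ X (n-1)) ∈ S3 := Or.inl rfl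
  have hB : (X p ++ [2] ++ X q, X p' ++ [2] ++ X q') ∈ S3 := Or.inr (Or.inl rfl)
  have hC : (X p ++ [3] ++ X q, X (n-1) ++ [3]) ∈ S3 := Or.inr (Or.inr rfl)
  have hE : (X p ++ [1, 2, 3] ++ X q, [1] ++ X p' ++ [2] ++ X q' ++ [3]) ∈ S1 := rfl
  have hn1 : X (n - 1) = X p ++ X q := by rw [← hpq, X_add]
  have hn1' : X (n - 1) = X p' ++ X q' := by rw [← hpq', X_add]
  refine ⟨?_, ?_, ?_, ?_⟩
  · -- direction 1
    -- φ for A with 1 ↦ [1,2,3]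
    have s1 : Deduce S3 (X p ++ [1,2,3] ++ X q) ([1,2,3] ++ X (n-1)) := by
      have := Deduce.step (S := S3) [] []
        (fun i => if i = 0 then [0] else [1,2,3]) hA
      simpa [subst, List.flatMap_append, substX, replX] using this
    have s2 : Deduce S3 ([1,2] ++ (X p ++ [3] ++ X q)) ([1,2] ++ (X (n-1) ++ [3])) := by
      have := Deduce.step (S := S3) [1,2] []
        (fun i => if i = 0 then [0] else [i]) hC
      simpa [subst, List.flatMap_append, substX, replX] using this
    have s3 : Deduce S3 ([1] ++ (X p ++ [2] ++ X q) ++ [3]) ([1] ++ ([2] ++ X (n-1)) ++ [3]) := by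
      have := Deduce.step (S := S3) [1] [3]
        (fun i => if i = 0 then [0] else [2]) hA
      simpa [subst, List.flatMap_append, substX, replX] using this
    have s4 : Deduce S3 ([1] ++ (X p ++ [2] ++ X q) ++ [3]) ([1] ++ (X p' ++ [2] ++ X q') ++ [3]) := by
      have := Deduce.step (S := S3) [1] [3]
        (fun i => if i = 0 then [0] else [i]) hB
      simpa [subst, List.flatMap_append, substX, replX] using this
    have e1 : [1,2,3] ++ X (n-1) = [1,2] ++ (X (n-1) ++ [3]) → True := fun _ => trivial
    -- chain
    have c1 : Deduce S3 (X p ++ [1,2,3] ++ X q) ([1,2] ++ (X (n-1) ++ [3])) := by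
      refine s1.trans ?_
      have s1' : Deduce S3 ([1,2] ++ (X p ++ [3] ++ X q)) ([1,2] ++ (X (n-1) ++ [3])) := s2
      have : Deduce S3 ([1,2,3] ++ X (n-1)) ([1,2] ++ (X p ++ [3] ++ X q)) := by
        have := Deduce.step (S := S3) [1,2] []
          (fun i => if i = 0 then [0] else [3]) hA
        have h' := this.symm
        simpa [subst, List.flatMap_append, substX, replX] using h'
      exact this.trans s1'
    have c2 : Deduce S3 ([1,2] ++ (X (n-1) ++ [3])) ([1] ++ ([2] ++ X (n-1)) ++ [3]) := by
      have h34 : ([1,2] ++ (X (n-1) ++ [3]) : Word) = [1] ++ ([2] ++ X (n-1)) ++ [3] := by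
        simp
      rw [h34]
      exact Deduce.refl _
    have final : Deduce S3 (X p ++ [1,2,3] ++ X q) ([1] ++ (X p' ++ [2] ++ X q') ++ [3]) :=
      ((c1.trans c2).trans s3.symm).trans s4
    have : ([1] ++ (X p' ++ [2] ++ X q') ++ [3] : Word) = [1] ++ X p' ++ [2] ++ X q' ++ [3] := by
      simp
    rwa [this] at final
  · -- A from E
    have := Deduce.step (S := S1) [] []
      (fun i => if i = 0 then [0] else if i = 1 then [1] else []) hE
    simp [subst, List.flatMap_append, substX, replX] at this
    rw [hn1']
    simpa [X] using this
  · -- B from E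
    have := Deduce.step (S := S1) [] []
      (fun i => if i = 0 then [0] else if i = 2 then [2] else []) hE
    simp [subst, List.flatMap_append, substX, replX] at this
    simpa [X] using this
  · -- C from E
    have := Deduce.step (S := S1) [] []
      (fun i => if i = 0 then [0] else if i = 3 then [3] else []) hE
    simp [subst, List.flatMap_append, substX, replX] at this
    rw [← List.append_assoc, ← hn1'] at this
    simpa using this
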